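/- Let H be a complex Hilbert space with dim H = 3, fix π/4 < α < π/2, set a := cos α, and let {e₁, e₂} ⊆ H be an orthonormal system. Then: (ii) if a ≠ 1/√3 and c ≥ d > a with c² + d² = 1, then the circle {[c·e₁ + λ·d·e₂] : λ ∈ ℂ, |λ| = 1} is highly-α-symmetric; (iii) if a = 1/√3 and c > d > a with c² + d² = 1, then the circle {[c·e₁ + λ·d·e₂] : λ ∈ ℂ, |λ| = 1} is highly-α-symmetric; (iv) if 0 < d < min{a, √((1 − 2a²)/(1 − a²))} and c² + d² = 1 with c > 0, then the circle {[c·e₁ + λ·d·e₂] : λ ∈ ℂ, |λ| = 1} is not highly-α-symmetric. -/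

import Mathlib

noncomputable section

variable {H : Type*} [NormedAddCommGroup H] [InnerProductSpace ℂ H]

/-- The quantum angle (Fubini–Study distance) between two lines,
computed from unit representatives. -/
def qAngle (x y : Projectivization ℂ H) : ℝ :=
  Real.arccos (‖(inner ℂ x.rep y.rep : ℂ)‖ / (‖x.rep‖ * ‖y.rep‖))

/-- The α-set of a set of lines. -/
def alphaSet (α : ℝ) (S : Set (Projectivization ℂ H)) : Set (Projectivization ℂ H) :=
  {x | ∀ y ∈ S, qAngle x y = α}

/-- φ is a Wigner symmetry: it is induced by a unitary or an antiunitary operator. -/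
def IsWignerSymmetry (φ : Projectivization ℂ H → Projectivization ℂ H) : Prop :=
  ∃ U : H → H,
    ((∃ e : H ≃ₗᵢ[ℂ] H, U = ⇑e) ∨ (∃ e : H ≃ₗᵢ⋆[ℂ] H, U = ⇑e)) ∧
    ∀ (v : H) (hv : v ≠ 0),
      (φ (Projectivization.mk ℂ v hv)).submodule = Submodule.span ℂ {U v}

/-- The circle determined by an orthonormal pair and coefficients c, d. -/
def circleSet (e₁ e₂ : H) (c d : ℝ) : Set (Projectivization ℂ H) :=
  {x | ∃ lam : ℂ, ‖lam‖ = 1 ∧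
    x.submodule = Submodule.span ℂ {(c : ℂ) • e₁ + (lam * d) • e₂}}

/-- A circle in the projective space. -/
def IsCircle (T : Set (Projectivization ℂ H)) : Prop :=
  ∃ (e₁ e₂ : H) (c d : ℝ), ‖e₁‖ = 1 ∧ ‖e₂‖ = 1 ∧ (inner ℂ e₁ e₂ : ℂ) = 0 ∧
    0 < c ∧ 0 < d ∧ c ^ 2 + d ^ 2 = 1 ∧ T = circleSet e₁ e₂ c d

/-- A highly-α-symmetric set. -/
def IsHighlyAlphaSymmetric (α : ℝ) (T : Set (Projectivization ℂ H)) : Prop :=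
  T.Infinite ∧ (alphaSet α T).Infinite ∧
    ∀ S : Set (Projectivization ℂ H), S ⊆ T → S.ncard = 3 →
      alphaSet α (alphaSet α S) = T

open Projectivization ComplexConjugate

namespace CP


lemma sq_decomp (z : ℂ) : z.re^2 + z.im^2 = ‖z‖^2 := by
  rw [Complex.sq_norm, Complex.normSq_apply]; ring

/-- expansion of |p + q|² for complex numbers -/
lemma normsq_add (p q : ℂ) : ‖p + q‖^2 = ‖p‖^2 + ‖q‖^2 + 2*(q * conj p).re := by
  have h := norm_add_sq (𝕜 := ℂ) p q
  rw [h]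
  have h2 : (inner ℂ p q : ℂ) = conj p * q := by simp [RCLike.inner_apply, mul_comm]
  rw [h2]
  have h3 : RCLike.re (conj p * q) = (conj p * q).re := by simp [RCLike.re_to_complex]
  rw [h3]
  rw [mul_comm q (conj p)]
  ring

lemma key3_aux {l₁ l₂ l₃ w : ℂ} (h1 : ‖l₁‖ = 1) (h2 : ‖l₂‖ = 1) (h3 : ‖l₃‖ = 1)
    (h12 : l₁ ≠ l₂) (h13 : l₁ ≠ l₃) (h23 : l₂ ≠ l₃)
    (e12 : (l₁*w).re = (l₂*w).re) (e13 : (l₁*w).re = (l₃*w).re) : w = 0 := by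
  by_contra hw
  have d12 : l₁*w ≠ l₂*w := fun h => h12 (mul_right_cancel₀ hw h)
  have d13 : l₁*w ≠ l₃*w := fun h => h13 (mul_right_cancel₀ hw h)
  have d23 : l₂*w ≠ l₃*w := fun h => h23 (mul_right_cancel₀ hw h)
  have n1 : ‖l₁*w‖ = ‖w‖ := by rw [norm_mul, h1, one_mul]
  have n2 : ‖l₂*w‖ = ‖w‖ := by rw [norm_mul, h2, one_mul]
  have n3 : ‖l₃*w‖ = ‖w‖ := by rw [norm_mul, h3, one_mul]
  have sq1 := sq_decomp (l₁*w); rw [n1] at sq1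
  have sq2 := sq_decomp (l₂*w); rw [n2] at sq2
  have sq3 := sq_decomp (l₃*w); rw [n3] at sq3
  -- imaginary parts: squares are equal
  have i12 : ((l₁*w).im - (l₂*w).im) * ((l₁*w).im + (l₂*w).im) = 0 := by
    linear_combination sq1 - sq2 - ((l₁*w).re + (l₂*w).re) * e12
  have i13 : ((l₁*w).im - (l₃*w).im) * ((l₁*w).im + (l₃*w).im) = 0 := by
    linear_combination sq1 - sq3 - ((l₁*w).re + (l₃*w).re) * e13
  have ext12 : (l₁*w).im ≠ (l₂*w).im := fun h => d12 (Complex.ext e12 h)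
  have ext13 : (l₁*w).im ≠ (l₃*w).im := fun h => d13 (Complex.ext e13 h)
  have e23 : (l₂*w).re = (l₃*w).re := e12 ▸ e13
  have ext23 : (l₂*w).im ≠ (l₃*w).im := fun h => d23 (Complex.ext e23 h)
  rcases mul_eq_zero.mp i12 with h | h
  · exact ext12 (by linarith)
  · rcases mul_eq_zero.mp i13 with h' | h'
    · exact ext13 (by linarith)
    · exact ext23 (by linarith)

/-- The key three-point lemma: if `‖p + lᵢ q‖ = a` for three distinct unimodular `lᵢ`,
then `p q̄ = 0` and `‖p‖² + ‖q‖² = a²`. -/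
lemma key3 {p q : ℂ} {a : ℝ} {l₁ l₂ l₃ : ℂ} (h1 : ‖l₁‖ = 1) (h2 : ‖l₂‖ = 1) (h3 : ‖l₃‖ = 1)
    (h12 : l₁ ≠ l₂) (h13 : l₁ ≠ l₃) (h23 : l₂ ≠ l₃)
    (e1 : ‖p + l₁*q‖ = a) (e2 : ‖p + l₂*q‖ = a) (e3 : ‖p + l₃*q‖ = a) :
    (p = 0 ∨ q = 0) ∧ ‖p‖^2 + ‖q‖^2 = a^2 := by
  set w := q * conj p with hwdef
  have E1 : ‖p‖^2 + ‖l₁*q‖^2 + 2*(l₁*q * conj p).re = a^2 := by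
    rw [← normsq_add]; rw [e1]
  have E2 : ‖p‖^2 + ‖l₂*q‖^2 + 2*(l₂*q * conj p).re = a^2 := by
    rw [← normsq_add]; rw [e2]
  have E3 : ‖p‖^2 + ‖l₃*q‖^2 + 2*(l₃*q * conj p).re = a^2 := by
    rw [← normsq_add]; rw [e3]
  have n1 : ‖l₁*q‖ = ‖q‖ := by rw [norm_mul, h1, one_mul]
  have n2 : ‖l₂*q‖ = ‖q‖ := by rw [norm_mul, h2, one_mul]
  have n3 : ‖l₃*q‖ = ‖q‖ := by rw [norm_mul, h3, one_mul]
  rw [n1] at E1; rw [n2] at E2; rw [n3] at E3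
  have m1 : l₁*q*conj p = l₁ * w := by rw [hwdef]; ring
  have m2 : l₂*q*conj p = l₂ * w := by rw [hwdef]; ring
  have m3 : l₃*q*conj p = l₃ * w := by rw [hwdef]; ring
  rw [m1] at E1; rw [m2] at E2; rw [m3] at E3
  have r12 : (l₁*w).re = (l₂*w).re := by linarith
  have r13 : (l₁*w).re = (l₃*w).re := by linarith
  have hw0 : w = 0 := key3_aux h1 h2 h3 h12 h13 h23 r12 r13
  constructor
  · rcases mul_eq_zero.mp hw0 with h | h
    · exact Or.inr h
    · exact Or.inl (by simpa using congrArg (starRingEnd ℂ) h)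
  · rw [hw0] at E1
    simp only [mul_zero, Complex.zero_re, add_zero] at E1
    linarith



lemma norm_inner_div_eq {v u : H} (hv : v ≠ 0) (hu : u ≠ 0) :
    ‖(inner ℂ ((Projectivization.mk ℂ v hv).rep) ((Projectivization.mk ℂ u hu).rep) : ℂ)‖ /
      (‖(Projectivization.mk ℂ v hv).rep‖ * ‖(Projectivization.mk ℂ u hu).rep‖)
      = ‖(inner ℂ v u : ℂ)‖ / (‖v‖ * ‖u‖) := by
  obtain ⟨s, hs⟩ := Projectivization.exists_smul_eq_mk_rep ℂ v hv
  obtain ⟨t, ht⟩ := Projectivization.exists_smul_eq_mk_rep ℂ u hu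
  rw [← hs, ← ht, Units.smul_def, Units.smul_def]
  rw [inner_smul_left, inner_smul_right, norm_smul, norm_smul, norm_mul, norm_mul]
  have hs0 : ‖(s : ℂ)‖ ≠ 0 := by simp [Units.ne_zero]
  have ht0 : ‖(t : ℂ)‖ ≠ 0 := by simp [Units.ne_zero]
  have hvn : ‖v‖ ≠ 0 := norm_ne_zero_iff.mpr hv
  have hun : ‖u‖ ≠ 0 := norm_ne_zero_iff.mpr hu
  rw [RCLike.norm_conj]
  field_simp

lemma qAngle_mk_eq_iff {v u : H} (hv : v ≠ 0) (hu : u ≠ 0) (hvn : ‖v‖ = 1) (hun : ‖u‖ = 1)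
    {α : ℝ} (h0 : 0 ≤ α) (hπ : α ≤ Real.pi) :
    qAngle (Projectivization.mk ℂ v hv) (Projectivization.mk ℂ u hu) = α
      ↔ ‖(inner ℂ v u : ℂ)‖ = Real.cos α := by
  unfold qAngle
  rw [norm_inner_div_eq hv hu, hvn, hun]
  simp only [mul_one, div_one]
  constructor
  · intro h
    have hle : ‖(inner ℂ v u : ℂ)‖ ≤ 1 := by
      have h2 := norm_inner_le_norm (𝕜 := ℂ) v u
      rw [hvn, hun] at h2; simpa using h2
    rw [← h, Real.cos_arccos (by linarith [norm_nonneg (inner ℂ v u : ℂ)]) hle]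
  · intro h; rw [h, Real.arccos_cos h0 hπ]

lemma submodule_eq_iff (x : Projectivization ℂ H) {u : H} (hu : u ≠ 0) :
    x.submodule = Submodule.span ℂ {u} ↔ x = Projectivization.mk ℂ u hu := by
  constructor
  · intro h
    have h1 : (Submodule.span ℂ {x.rep}) = Submodule.span ℂ {u} := by
      rw [← Projectivization.submodule_mk x.rep x.rep_nonzero, Projectivization.mk_rep, h]
    obtain ⟨z, hz⟩ := Submodule.span_singleton_eq_span_singleton.mp h1
    rw [← Projectivization.mk_rep x]
    exact (Projectivization.mk_eq_mk_iff ℂ _ _ _ hu).mpr ⟨z⁻¹, by rw [← hz, inv_smul_smul]⟩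
  · rintro rfl; exact Projectivization.submodule_mk u hu



lemma conj_mul_self (z : ℂ) : conj z * z = ((‖z‖^2 : ℝ) : ℂ) := by
  rw [mul_comm, Complex.mul_conj, Complex.normSq_eq_norm_sq]

variable (b : OrthonormalBasis (Fin 3) ℂ H)

lemma inner_bb (i j : Fin 3) : (inner ℂ (b i) (b j) : ℂ) = if i = j then 1 else 0 :=
  orthonormal_iff_ite.mp b.orthonormal i j

lemma inner3 (x₁ x₂ x₃ y₁ y₂ y₃ : ℂ) :
    (inner ℂ (x₁ • b 0 + x₂ • b 1 + x₃ • b 2) (y₁ • b 0 + y₂ • b 1 + y₃ • b 2) : ℂ)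
      = conj x₁ * y₁ + conj x₂ * y₂ + conj x₃ * y₃ := by
  have h := inner_bb b
  simp only [inner_add_left, inner_add_right, inner_smul_left, inner_smul_right, h]
  norm_num [Fin.ext_iff]
  ring

lemma norm3 (x₁ x₂ x₃ : ℂ) :
    ‖x₁ • b 0 + x₂ • b 1 + x₃ • b 2‖^2 = ‖x₁‖^2 + ‖x₂‖^2 + ‖x₃‖^2 := by
  have h := inner3 b x₁ x₂ x₃ x₁ x₂ x₃
  rw [inner_self_eq_norm_sq_to_K, conj_mul_self, conj_mul_self, conj_mul_self] at h
  have h2 : ((‖x₁ • b 0 + x₂ • b 1 + x₃ • b 2‖ ^ 2 : ℝ) : ℂ)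
      = ((‖x₁‖^2 + ‖x₂‖^2 + ‖x₃‖^2 : ℝ) : ℂ) := by push_cast; push_cast at h; exact h
  exact Complex.ofReal_inj.mp h2

lemma exists_coords (x : Projectivization ℂ H) :
    ∃ (v : H) (hv : v ≠ 0), x = Projectivization.mk ℂ v hv ∧ ‖v‖ = 1 ∧
      ∃ X Y Z : ℂ, v = X • b 0 + Y • b 1 + Z • b 2 ∧ ‖X‖^2 + ‖Y‖^2 + ‖Z‖^2 = 1 := by
  have hrep0 := x.rep_nonzero
  have hn : ‖x.rep‖ ≠ 0 := norm_ne_zero_iff.mpr hrep0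
  set v := ((‖x.rep‖⁻¹ : ℝ) : ℂ) • x.rep with hvdef
  have hv0 : v ≠ 0 := smul_ne_zero (by exact_mod_cast inv_ne_zero hn) hrep0
  have hvn : ‖v‖ = 1 := by
    rw [hvdef, norm_smul]
    simp only [Complex.norm_real, Real.norm_eq_abs, abs_of_nonneg (inv_nonneg.mpr (norm_nonneg _))]
    field_simp
  have hxv : x = Projectivization.mk ℂ v hv0 := by
    rw [← Projectivization.mk_rep x]
    exact ((Projectivization.mk_eq_mk_iff' ℂ _ _ hv0 hrep0).mpr ⟨_, hvdef.symm⟩).symm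
  have hsum := b.sum_repr' v
  rw [Fin.sum_univ_three] at hsum
  refine ⟨v, hv0, hxv, hvn, inner ℂ (b 0) v, inner ℂ (b 1) v, inner ℂ (b 2) v, hsum.symm, ?_⟩
  have := norm3 b (inner ℂ (b 0) v) (inner ℂ (b 1) v) (inner ℂ (b 2) v)
  rw [hsum, hvn] at this
  simpa using this.symm



lemma eq_of_sq {p aa : ℝ} (hp : 0 ≤ p) (ha : 0 ≤ aa) (h : p^2 = aa^2) : p = aa := by
  rw [← Real.sqrt_sq hp, h, Real.sqrt_sq ha]

lemma inner_b0 (X Y Z : ℂ) : (inner ℂ (b 0) (X • b 0 + Y • b 1 + Z • b 2) : ℂ) = X := by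
  have h : b 0 = (1:ℂ) • b 0 + (0:ℂ) • b 1 + (0:ℂ) • b 2 := by simp
  nth_rw 1 [h]
  rw [inner3]
  simp

lemma inner_b1 (X Y Z : ℂ) : (inner ℂ (b 1) (X • b 0 + Y • b 1 + Z • b 2) : ℂ) = Y := by
  have h : b 1 = (0:ℂ) • b 0 + (1:ℂ) • b 1 + (0:ℂ) • b 2 := by simp
  nth_rw 1 [h]
  rw [inner3]
  simp

/-- The circle vector with parameters g h. -/
def gv (g h : ℝ) (l : ℂ) : H := (g:ℂ) • b 0 + (l * h) • b 1

variable {g h : ℝ}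

lemma gv_eq (l : ℂ) : gv b g h l = (g:ℂ) • b 0 + (l*h) • b 1 + (0:ℂ) • b 2 := by simp [gv]

lemma gv_ne (hg : 0 < g) (l : ℂ) : gv b g h l ≠ 0 := by
  intro h0
  have h1 : (inner ℂ (b 0) (gv b g h l) : ℂ) = (g:ℂ) := by rw [gv_eq, inner_b0]
  rw [h0, inner_zero_right] at h1
  exact hg.ne' (by exact_mod_cast h1.symm)

lemma gv_norm (hg : 0 < g) (hh : 0 < h) (hgh : g^2 + h^2 = 1) {l : ℂ} (hl : ‖l‖ = 1) :
    ‖gv b g h l‖ = 1 := by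
  have h1 : ‖gv b g h l‖^2 = 1 := by
    rw [gv_eq, norm3]
    simp only [norm_mul, Complex.norm_real, Real.norm_eq_abs, hl, norm_zero]
    rw [abs_of_pos hg, abs_of_pos hh]
    ring_nf
    nlinarith [hgh]
  have h2 := norm_nonneg (gv b g h l)
  exact eq_of_sq h2 zero_le_one (by rw [h1]; norm_num)

lemma gv_inj (hg : 0 < g) (hh : 0 < h) {l l' : ℂ}
    (heq : Projectivization.mk ℂ (gv b g h l) (gv_ne b hg l)
      = Projectivization.mk ℂ (gv b g h l') (gv_ne b hg l')) : l = l' := by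
  obtain ⟨t, ht⟩ := (Projectivization.mk_eq_mk_iff' ℂ _ _ _ _).mp heq
  have h0 : (inner ℂ (b 0) (t • gv b g h l') : ℂ) = t * g := by
    rw [inner_smul_right, gv_eq, inner_b0]
  have h0' : (inner ℂ (b 0) (gv b g h l) : ℂ) = (g:ℂ) := by rw [gv_eq, inner_b0]
  rw [ht, h0'] at h0
  have hg0 : (g:ℂ) ≠ 0 := by exact_mod_cast hg.ne'
  have ht1 : t = 1 := by
    have hfac : (t - 1) * (g:ℂ) = 0 := by linear_combination -h0
    rcases mul_eq_zero.mp hfac with h' | h'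
    · exact sub_eq_zero.mp h'
    · exact absurd h' hg0
  rw [ht1, one_smul] at ht
  have h1 : (inner ℂ (b 1) (gv b g h l') : ℂ) = l' * h := by rw [gv_eq, inner_b1]
  have h1' : (inner ℂ (b 1) (gv b g h l) : ℂ) = l * h := by rw [gv_eq, inner_b1]
  rw [← ht, h1] at h1'
  have hh0 : (h:ℂ) ≠ 0 := by exact_mod_cast hh.ne'
  exact mul_right_cancel₀ hh0 h1'.symm

lemma inner_gv (X Y Z : ℂ) (l : ℂ) :
    (inner ℂ (X • b 0 + Y • b 1 + Z • b 2) (gv b g h l) : ℂ)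
      = conj X * g + l * ((h:ℂ) * conj Y) := by
  rw [gv_eq, inner3]
  ring

lemma norm_conj_mul_real (X : ℂ) (g : ℝ) (hg : 0 ≤ g) : ‖conj X * (g:ℂ)‖ = g * ‖X‖ := by
  rw [norm_mul, RCLike.norm_conj, Complex.norm_real, Real.norm_eq_abs, abs_of_nonneg hg]
  ring

/-- Forward direction: three angle conditions pin down the shape. -/
lemma forward3 (hg : 0 < g) (hh : 0 < h) {a : ℝ} (ha : 0 < a)
    (X Y Z : ℂ) {l₁ l₂ l₃ : ℂ} (h1 : ‖l₁‖ = 1) (h2 : ‖l₂‖ = 1) (h3 : ‖l₃‖ = 1)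
    (h12 : l₁ ≠ l₂) (h13 : l₁ ≠ l₃) (h23 : l₂ ≠ l₃)
    (e1 : ‖(inner ℂ (X • b 0 + Y • b 1 + Z • b 2) (gv b g h l₁) : ℂ)‖ = a)
    (e2 : ‖(inner ℂ (X • b 0 + Y • b 1 + Z • b 2) (gv b g h l₂) : ℂ)‖ = a)
    (e3 : ‖(inner ℂ (X • b 0 + Y • b 1 + Z • b 2) (gv b g h l₃) : ℂ)‖ = a) :
    (X = 0 ∨ Y = 0) ∧ g^2 * ‖X‖^2 + h^2 * ‖Y‖^2 = a^2 := by
  rw [inner_gv] at e1 e2 e3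
  have key := key3 h1 h2 h3 h12 h13 h23 e1 e2 e3
  have hnp : ‖conj X * (g:ℂ)‖ = g * ‖X‖ := norm_conj_mul_real X g hg.le
  have hnq : ‖(h:ℂ) * conj Y‖ = h * ‖Y‖ := by
    rw [norm_mul, RCLike.norm_conj, Complex.norm_real, Real.norm_eq_abs, abs_of_pos hh]
  constructor
  · rcases key.1 with h' | h'
    · left
      have : conj X = 0 ∨ (g:ℂ) = 0 := mul_eq_zero.mp h'
      rcases this with h'' | h''
      · simpa using congrArg (starRingEnd ℂ) h''
      · exact absurd (by exact_mod_cast h'' : g = 0) hg.ne'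
    · right
      have : (h:ℂ) = 0 ∨ conj Y = 0 := mul_eq_zero.mp h'
      rcases this with h'' | h''
      · exact absurd (by exact_mod_cast h'' : h = 0) hh.ne'
      · simpa using congrArg (starRingEnd ℂ) h''
  · have := key.2
    rw [hnp, hnq] at this
    nlinarith [this]

/-- Backward direction. -/
lemma backward (hg : 0 < g) (hh : 0 < h) {a : ℝ} (ha : 0 < a)
    (X Y Z : ℂ) (hcase : X = 0 ∨ Y = 0) (hsum : g^2 * ‖X‖^2 + h^2 * ‖Y‖^2 = a^2)
    {l : ℂ} (hl : ‖l‖ = 1) :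
    ‖(inner ℂ (X • b 0 + Y • b 1 + Z • b 2) (gv b g h l) : ℂ)‖ = a := by
  rw [inner_gv]
  rcases hcase with h' | h'
  · subst h'
    simp only [map_zero, zero_mul, zero_add]
    rw [norm_mul, hl, one_mul, norm_mul, Complex.norm_real, Real.norm_eq_abs,
      abs_of_pos hh, RCLike.norm_conj]
    simp only [norm_zero] at hsum
    exact eq_of_sq (by positivity) ha.le (by nlinarith [hsum])
  · subst h'
    simp only [map_zero, mul_zero, add_zero]
    rw [norm_conj_mul_real X g hg.le]
    simp only [norm_zero] at hsum
    exact eq_of_sq (by positivity) ha.le (by nlinarith [hsum])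


-- ==================== set-level lemmas ====================

variable {α a : ℝ}

lemma angle_iff (hcos : Real.cos α = a) (hα0 : 0 ≤ α) (hαπ : α ≤ Real.pi)
    {v u : H} (hv : v ≠ 0) (hu : u ≠ 0) (hvn : ‖v‖ = 1) (hun : ‖u‖ = 1) :
    qAngle (Projectivization.mk ℂ v hv) (Projectivization.mk ℂ u hu) = α
      ↔ ‖(inner ℂ v u : ℂ)‖ = a := by
  rw [qAngle_mk_eq_iff hv hu hvn hun hα0 hαπ, hcos]

lemma mem_circleSet_iff {g h : ℝ} (hg : 0 < g) (x : Projectivization ℂ H) :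
    x ∈ circleSet (b 0) (b 1) g h
      ↔ ∃ l : ℂ, ‖l‖ = 1 ∧ x = Projectivization.mk ℂ (gv b g h l) (gv_ne b hg l) := by
  constructor
  · rintro ⟨l, hl, hsub⟩
    exact ⟨l, hl, (submodule_eq_iff x (gv_ne b hg l)).mp hsub⟩
  · rintro ⟨l, hl, rfl⟩
    exact ⟨l, hl, (submodule_eq_iff _ (gv_ne b hg l)).mpr rfl⟩

lemma units_1neg1I : ‖(1:ℂ)‖ = 1 ∧ ‖(-1:ℂ)‖ = 1 ∧ ‖Complex.I‖ = 1 ∧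
    (1:ℂ) ≠ -1 ∧ (1:ℂ) ≠ Complex.I ∧ (-1:ℂ) ≠ Complex.I := by
  refine ⟨by norm_num, by norm_num, by simp, by norm_num, ?_, ?_⟩
  · intro hh
    have := congrArg Complex.im hh
    simp at this
  · intro hh
    have := congrArg Complex.im hh
    simp at this

/-- Forward: membership in the α-set of the full circle gives the coordinate conditions. -/
lemma alpha_circle_coords {g h : ℝ} (hcos : Real.cos α = a) (hα0 : 0 ≤ α) (hαπ : α ≤ Real.pi)
    (h0a : 0 < a) (hg : 0 < g) (hh : 0 < h) (hgh : g^2 + h^2 = 1)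
    {x : Projectivization ℂ H} (hx : x ∈ alphaSet α (circleSet (b 0) (b 1) g h))
    {v : H} (hv : v ≠ 0) (hxv : x = Projectivization.mk ℂ v hv) (hvn : ‖v‖ = 1)
    {X Y Z : ℂ} (hco : v = X • b 0 + Y • b 1 + Z • b 2) :
    (X = 0 ∨ Y = 0) ∧ g^2 * ‖X‖^2 + h^2 * ‖Y‖^2 = a^2 := by
  obtain ⟨u1, u2, u3, ne12, ne13, ne23⟩ := units_1neg1I
  have mem : ∀ l : ℂ, ‖l‖ = 1 →
      ‖(inner ℂ v (gv b g h l) : ℂ)‖ = a := by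
    intro l hl
    have hmem : Projectivization.mk ℂ (gv b g h l) (gv_ne b hg l)
        ∈ circleSet (b 0) (b 1) g h := (mem_circleSet_iff b hg _).mpr ⟨l, hl, rfl⟩
    have := hx _ hmem
    rw [hxv] at this
    exact (angle_iff hcos hα0 hαπ hv _ hvn (gv_norm b hg hh hgh hl)).mp this
  rw [hco] at mem
  exact forward3 b hg hh h0a X Y Z u1 u2 u3 ne12 ne13 ne23
    (mem 1 u1) (mem (-1) u2) (mem Complex.I u3)

/-- Backward: the coordinate conditions give membership in the α-set of the circle. -/
lemma alpha_circle_of_coords {g h : ℝ} (hcos : Real.cos α = a) (hα0 : 0 ≤ α) (hαπ : α ≤ Real.pi)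
    (h0a : 0 < a) (hg : 0 < g) (hh : 0 < h) (hgh : g^2 + h^2 = 1)
    {x : Projectivization ℂ H}
    {v : H} (hv : v ≠ 0) (hxv : x = Projectivization.mk ℂ v hv) (hvn : ‖v‖ = 1)
    {X Y Z : ℂ} (hco : v = X • b 0 + Y • b 1 + Z • b 2)
    (hcase : X = 0 ∨ Y = 0) (hsum : g^2 * ‖X‖^2 + h^2 * ‖Y‖^2 = a^2) :
    x ∈ alphaSet α (circleSet (b 0) (b 1) g h) := by
  intro y hy
  obtain ⟨l, hl, rfl⟩ := (mem_circleSet_iff b hg _).mp hy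
  rw [hxv]
  rw [angle_iff hcos hα0 hαπ hv _ hvn (gv_norm b hg hh hgh hl)]
  rw [hco]
  exact backward b hg hh h0a X Y Z hcase hsum hl

/-- The α-set of any 3-element subset of the circle equals the α-set of the whole circle. -/
lemma alphaSet_three {g h : ℝ} (hcos : Real.cos α = a) (hα0 : 0 ≤ α) (hαπ : α ≤ Real.pi)
    (h0a : 0 < a) (hg : 0 < g) (hh : 0 < h) (hgh : g^2 + h^2 = 1)
    (S : Set (Projectivization ℂ H)) (hS : S ⊆ circleSet (b 0) (b 1) g h)
    (hS3 : S.ncard = 3) :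
    alphaSet α S = alphaSet α (circleSet (b 0) (b 1) g h) := by
  apply Set.Subset.antisymm
  · intro x hx
    obtain ⟨y₁, y₂, y₃, n12, n13, n23, rfl⟩ := Set.ncard_eq_three.mp hS3
    obtain ⟨l₁, hl₁, he₁⟩ := (mem_circleSet_iff b hg y₁).mp (hS (by simp))
    obtain ⟨l₂, hl₂, he₂⟩ := (mem_circleSet_iff b hg y₂).mp (hS (by simp))
    obtain ⟨l₃, hl₃, he₃⟩ := (mem_circleSet_iff b hg y₃).mp (hS (by simp))
    have d12 : l₁ ≠ l₂ := fun he => n12 (by rw [he₁, he₂, he])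
    have d13 : l₁ ≠ l₃ := fun he => n13 (by rw [he₁, he₃, he])
    have d23 : l₂ ≠ l₃ := fun he => n23 (by rw [he₂, he₃, he])
    obtain ⟨v, hv, hxv, hvn, X, Y, Z, hco, -⟩ := exists_coords b x
    have mem : ∀ (l : ℂ) (y : Projectivization ℂ H), ‖l‖ = 1 →
        y = Projectivization.mk ℂ (gv b g h l) (gv_ne b hg l) → y ∈ ({y₁, y₂, y₃} : Set _) →
        ‖(inner ℂ v (gv b g h l) : ℂ)‖ = a := by
      intro l y hl hy hymem
      have := hx _ hymem
      rw [hxv, hy] at this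
      exact (angle_iff hcos hα0 hαπ hv _ hvn (gv_norm b hg hh hgh hl)).mp this
    have e1 := mem l₁ y₁ hl₁ he₁ (by simp)
    have e2 := mem l₂ y₂ hl₂ he₂ (by simp)
    have e3 := mem l₃ y₃ hl₃ he₃ (by simp)
    rw [hco] at e1 e2 e3
    have key := forward3 b hg hh h0a X Y Z hl₁ hl₂ hl₃ d12 d13 d23 e1 e2 e3
    exact alpha_circle_of_coords b hcos hα0 hαπ h0a hg hh hgh hv hxv hvn hco key.1 key.2
  · intro x hx y hy
    exact hx y (hS hy)

-- permuted bases
lemma bswap_props : ∃ b' : OrthonormalBasis (Fin 3) ℂ H,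
    b' 0 = b 0 ∧ b' 1 = b 2 ∧ b' 2 = b 1 := by
  refine ⟨b.reindex (Equiv.swap 1 2), ?_, ?_, ?_⟩
  · have h0 : (Equiv.swap (1:Fin 3) 2).symm 0 = 0 := by decide
    rw [OrthonormalBasis.reindex_apply, h0]
  · have h0 : (Equiv.swap (1:Fin 3) 2).symm 1 = 2 := by decide
    rw [OrthonormalBasis.reindex_apply, h0]
  · have h0 : (Equiv.swap (1:Fin 3) 2).symm 2 = 1 := by decide
    rw [OrthonormalBasis.reindex_apply, h0]

lemma brot_props : ∃ b' : OrthonormalBasis (Fin 3) ℂ H,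
    b' 0 = b 1 ∧ b' 1 = b 2 ∧ b' 2 = b 0 := by
  refine ⟨b.reindex (finRotate 3).symm, ?_, ?_, ?_⟩
  · have h0 : ((finRotate 3).symm).symm 0 = 1 := by decide
    rw [OrthonormalBasis.reindex_apply, h0]
  · have h0 : ((finRotate 3).symm).symm 1 = 2 := by decide
    rw [OrthonormalBasis.reindex_apply, h0]
  · have h0 : ((finRotate 3).symm).symm 2 = 0 := by decide
    rw [OrthonormalBasis.reindex_apply, h0]

/-- generic infinitude via unimodular parameters -/
lemma gen_infinite {g h : ℝ} (hg : 0 < g) (hh : 0 < h) (W : Set (Projectivization ℂ H))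
    (hmem : ∀ (l : ℂ) (hl : ‖l‖ = 1),
      Projectivization.mk ℂ (gv b g h l) (gv_ne b hg l) ∈ W) : W.Infinite := by
  haveI : Infinite ↥(Set.Ioo (0:ℝ) Real.pi) := Set.Ioo.infinite Real.pi_pos
  apply Set.infinite_of_injective_forall_mem
    (f := fun θ : Set.Ioo (0:ℝ) Real.pi =>
      Projectivization.mk ℂ (gv b g h (Complex.exp ((θ : ℝ) * Complex.I)))
        (gv_ne b hg _))
  · intro θ θ' hmk
    have hexp := gv_inj b hg hh hmk
    have hre := congrArg Complex.re hexp
    rw [Complex.exp_ofReal_mul_I_re, Complex.exp_ofReal_mul_I_re] at hre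
    have h1 : (θ : ℝ) ∈ Set.Icc 0 Real.pi := ⟨θ.2.1.le, θ.2.2.le⟩
    have h2 : (θ' : ℝ) ∈ Set.Icc 0 Real.pi := ⟨θ'.2.1.le, θ'.2.2.le⟩
    exact Subtype.ext (Real.injOn_cos h1 h2 hre)
  · intro θ
    exact hmem _ (by rw [Complex.norm_exp_ofReal_mul_I])

-- ==================== main positive/negative lemmas ====================

/-- points of the orthogonal circle (through b0,b2) lie in the α-set of the circle. -/
lemma wpoint_mem {g h : ℝ} (hcos : Real.cos α = a) (hα0 : 0 ≤ α) (hαπ : α ≤ Real.pi)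
    (h0a : 0 < a) (hg : 0 < g) (hh : 0 < h) (hgh : g^2 + h^2 = 1)
    (b2 : OrthonormalBasis (Fin 3) ℂ H) (hb20 : b2 0 = b 0) (hb21 : b2 1 = b 2)
    {G R : ℝ} (hG : 0 < G) (hR : 0 < R) (hGR : G^2 + R^2 = 1) (hGg : G * g = a)
    {μ : ℂ} (hμ : ‖μ‖ = 1) :
    Projectivization.mk ℂ (gv b2 G R μ) (gv_ne b2 hG μ)
      ∈ alphaSet α (circleSet (b 0) (b 1) g h) := by
  intro y hy
  obtain ⟨l, hl, rfl⟩ := (mem_circleSet_iff b hg y).mp hy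
  rw [angle_iff hcos hα0 hαπ _ _ (gv_norm b2 hG hR hGR hμ) (gv_norm b hg hh hgh hl)]
  have hco2 : gv b2 G R μ = (G:ℂ) • b 0 + (0:ℂ) • b 1 + (μ * R) • b 2 := by
    rw [gv, hb20, hb21]; module
  have hco1 : gv b g h l = (g:ℂ) • b 0 + (l * h) • b 1 + (0:ℂ) • b 2 := gv_eq b l
  rw [hco2, hco1, inner3]
  simp only [map_zero, zero_mul, mul_zero, add_zero]
  rw [Complex.conj_ofReal]
  have : ((G:ℂ)) * ((g:ℝ):ℂ) = ((G*g : ℝ) : ℂ) := by push_cast; ring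
  rw [this, hGg, Complex.norm_real, Real.norm_eq_abs, abs_of_pos h0a]

/-- analogous points through b1,b2 -/
lemma upoint_mem {g h : ℝ} (hcos : Real.cos α = a) (hα0 : 0 ≤ α) (hαπ : α ≤ Real.pi)
    (h0a : 0 < a) (hg : 0 < g) (hh : 0 < h) (hgh : g^2 + h^2 = 1)
    (b3 : OrthonormalBasis (Fin 3) ℂ H) (hb30 : b3 0 = b 1) (hb31 : b3 1 = b 2)
    {G R : ℝ} (hG : 0 < G) (hR : 0 < R) (hGR : G^2 + R^2 = 1) (hGg : G * h = a)
    {μ : ℂ} (hμ : ‖μ‖ = 1) :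
    Projectivization.mk ℂ (gv b3 G R μ) (gv_ne b3 hG μ)
      ∈ alphaSet α (circleSet (b 0) (b 1) g h) := by
  intro y hy
  obtain ⟨l, hl, rfl⟩ := (mem_circleSet_iff b hg y).mp hy
  rw [angle_iff hcos hα0 hαπ _ _ (gv_norm b3 hG hR hGR hμ) (gv_norm b hg hh hgh hl)]
  have hco2 : gv b3 G R μ = (0:ℂ) • b 0 + (G:ℂ) • b 1 + (μ * R) • b 2 := by
    rw [gv, hb30, hb31]; module
  have hco1 : gv b g h l = (g:ℂ) • b 0 + (l * h) • b 1 + (0:ℂ) • b 2 := gv_eq b l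
  rw [hco2, hco1, inner3]
  simp only [map_zero, zero_mul, mul_zero, add_zero, zero_add]
  rw [Complex.conj_ofReal]
  have hG2 : ((G:ℂ)) * (l * ((h:ℝ):ℂ)) = l * ((G*h : ℝ) : ℂ) := by push_cast; ring
  rw [hG2, hGg, norm_mul, hl, one_mul, Complex.norm_real, Real.norm_eq_abs, abs_of_pos h0a]

lemma circle_infinite {g h : ℝ} (hg : 0 < g) (hh : 0 < h) :
    (circleSet (b 0) (b 1) g h).Infinite :=
  gen_infinite b hg hh _ (fun l hl => (mem_circleSet_iff b hg _).mpr ⟨l, hl, rfl⟩)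

/-- auxiliary facts about G = a/g and R = √(1-(a/g)²) -/
lemma GR_facts {g : ℝ} (h0a : 0 < a) (hg : 0 < g) (hag : a < g) :
    0 < a/g ∧ (Real.sqrt (1 - (a/g)^2))^2 = 1 - (a/g)^2 ∧ 0 < Real.sqrt (1 - (a/g)^2) ∧
      (a/g)^2 + (Real.sqrt (1 - (a/g)^2))^2 = 1 ∧ (a/g) * g = a := by
  have hG : 0 < a/g := div_pos h0a hg
  have hGlt : a/g < 1 := (div_lt_one hg).mpr hag
  have hpos : 0 < 1 - (a/g)^2 := by nlinarith
  have hR2 : (Real.sqrt (1 - (a/g)^2))^2 = 1 - (a/g)^2 := Real.sq_sqrt hpos.le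
  exact ⟨hG, hR2, Real.sqrt_pos.mpr hpos, by rw [hR2]; ring,
    div_mul_cancel₀ a hg.ne'⟩

lemma alpha_circle_infinite {g h : ℝ} (hcos : Real.cos α = a) (hα0 : 0 ≤ α)
    (hαπ : α ≤ Real.pi) (h0a : 0 < a) (hg : 0 < g) (hh : 0 < h) (hgh : g^2 + h^2 = 1)
    (hag : a < g) :
    (alphaSet α (circleSet (b 0) (b 1) g h)).Infinite := by
  obtain ⟨b2, hb20, hb21, hb22⟩ := bswap_props b
  obtain ⟨hG, hR2, hR, hGR, hGg⟩ := GR_facts h0a hg hag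
  exact gen_infinite b2 hG hR _
    (fun l hl => wpoint_mem b hcos hα0 hαπ h0a hg hh hgh b2 hb20 hb21 hG hR hGR hGg hl)

set_option maxHeartbeats 1000000 in
lemma alpha_alpha_circle {g h : ℝ} (hcos : Real.cos α = a) (hα0 : 0 ≤ α) (hαπ : α ≤ Real.pi)
    (h0a : 0 < a) (hg : 0 < g) (hh : 0 < h) (hgh : g^2 + h^2 = 1)
    (hag : a < g) (hah : a < h) (hside : ¬(g = h ∧ a^2 = 1/3)) :
    alphaSet α (alphaSet α (circleSet (b 0) (b 1) g h)) = circleSet (b 0) (b 1) g h := by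
  obtain ⟨b2, hb20, hb21, hb22⟩ := bswap_props b
  obtain ⟨b3, hb30, hb31, hb32⟩ := brot_props b
  obtain ⟨hG, hR2, hR, hGR, hGg⟩ := GR_facts h0a hg hag
  obtain ⟨hG', hS2, hS, hGS, hGg'⟩ := GR_facts h0a hh hah
  obtain ⟨u1, u2, u3, ne12, ne13, ne23⟩ := units_1neg1I
  apply Set.Subset.antisymm
  · intro x hx
    obtain ⟨v, hv, hxv, hvn, X, Y, Z, hco, hXYZ⟩ := exists_coords b x
    have wcond : ∀ (μ : ℂ), ‖μ‖ = 1 → ‖(inner ℂ v (gv b2 (a/g) (Real.sqrt (1-(a/g)^2)) μ) : ℂ)‖ = a := by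
      intro μ hμ
      have h1 := hx _ (wpoint_mem b hcos hα0 hαπ h0a hg hh hgh b2 hb20 hb21 hG hR hGR hGg hμ)
      rw [hxv] at h1
      exact (angle_iff hcos hα0 hαπ hv _ hvn (gv_norm b2 hG hR hGR hμ)).mp h1
    have ucond : ∀ (μ : ℂ), ‖μ‖ = 1 → ‖(inner ℂ v (gv b3 (a/h) (Real.sqrt (1-(a/h)^2)) μ) : ℂ)‖ = a := by
      intro μ hμ
      have h1 := hx _ (upoint_mem b hcos hα0 hαπ h0a hg hh hgh b3 hb30 hb31 hG' hS hGS hGg' hμ)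
      rw [hxv] at h1
      exact (angle_iff hcos hα0 hαπ hv _ hvn (gv_norm b3 hG' hS hGS hμ)).mp h1
    have hco2 : v = X • b2 0 + Z • b2 1 + Y • b2 2 := by
      rw [hb20, hb21, hb22, hco]; module
    have hco3 : v = Y • b3 0 + Z • b3 1 + X • b3 2 := by
      rw [hb30, hb31, hb32, hco]; module
    have k1 : (X = 0 ∨ Z = 0) ∧ (a/g)^2 * ‖X‖^2 + (Real.sqrt (1-(a/g)^2))^2 * ‖Z‖^2 = a^2 := by
      refine forward3 b2 hG hR h0a X Z Y u1 u2 u3 ne12 ne13 ne23 ?_ ?_ ?_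
      · rw [← hco2]; exact wcond 1 u1
      · rw [← hco2]; exact wcond (-1) u2
      · rw [← hco2]; exact wcond Complex.I u3
    have k2 : (Y = 0 ∨ Z = 0) ∧ (a/h)^2 * ‖Y‖^2 + (Real.sqrt (1-(a/h)^2))^2 * ‖Z‖^2 = a^2 := by
      refine forward3 b3 hG' hS h0a Y Z X u1 u2 u3 ne12 ne13 ne23 ?_ ?_ ?_
      · rw [← hco3]; exact ucond 1 u1
      · rw [← hco3]; exact ucond (-1) u2
      · rw [← hco3]; exact ucond Complex.I u3
    by_cases hZ : Z = 0
    · -- x is on the circle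
      have hZn : ‖Z‖ = 0 := by rw [hZ, norm_zero]
      have hX2 : (a/g)^2 * ‖X‖^2 = a^2 := by
        have h' := k1.2; rw [hZn] at h'; linear_combination h'
      have hY2 : (a/h)^2 * ‖Y‖^2 = a^2 := by
        have h' := k2.2; rw [hZn] at h'; linear_combination h'
      have hgg : (a/g)^2 * g^2 = a^2 := by field_simp
      have hhh : (a/h)^2 * h^2 = a^2 := by field_simp
      have ha2ne : a^2 ≠ 0 := pow_ne_zero 2 h0a.ne'
      have hXn : ‖X‖ = g := by
        apply eq_of_sq (norm_nonneg X) hg.le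
        have h1 : a^2 * ‖X‖^2 = a^2 * g^2 := by
          linear_combination g^2 * hX2 - ‖X‖^2 * hgg
        exact mul_left_cancel₀ ha2ne h1
      have hYn : ‖Y‖ = h := by
        apply eq_of_sq (norm_nonneg Y) hh.le
        have h1 : a^2 * ‖Y‖^2 = a^2 * h^2 := by
          linear_combination h^2 * hY2 - ‖Y‖^2 * hhh
        exact mul_left_cancel₀ ha2ne h1
      have hX0 : X ≠ 0 := by
        intro h0; rw [h0, norm_zero] at hXn; exact hg.ne' hXn.symm
      have hgC : ((g:ℝ):ℂ) ≠ 0 := by exact_mod_cast hg.ne'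
      have hhC : ((h:ℝ):ℂ) ≠ 0 := by exact_mod_cast hh.ne'
      set l : ℂ := (Y * (g:ℝ)) / (X * (h:ℝ)) with hldef
      have hl : ‖l‖ = 1 := by
        rw [hldef, norm_div, norm_mul, norm_mul, Complex.norm_real, Complex.norm_real,
          Real.norm_eq_abs, Real.norm_eq_abs, abs_of_pos hg, abs_of_pos hh, hXn, hYn]
        field_simp
      have hveq : (X / (g:ℝ)) • gv b g h l = v := by
        rw [hco, hZ, gv, hldef]
        rw [smul_add, smul_smul, smul_smul]
        have e1 : X / ((g:ℝ):ℂ) * ((g:ℝ):ℂ) = X := by field_simp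
        have e2 : X / ((g:ℝ):ℂ) * ((Y * (g:ℝ)) / (X * (h:ℝ)) * ((h:ℝ):ℂ)) = Y := by
          field_simp
        rw [e1, e2]
        module
      refine (mem_circleSet_iff b hg x).mpr ⟨l, hl, ?_⟩
      rw [hxv]
      exact (Projectivization.mk_eq_mk_iff' ℂ _ _ hv (gv_ne b hg l)).mpr ⟨_, hveq⟩
    · -- contradiction case
      exfalso
      have hX0 : X = 0 := k1.1.resolve_right hZ
      have hY0 : Y = 0 := k2.1.resolve_right hZ
      have hZn : ‖Z‖^2 = 1 := by
        rw [hX0, hY0] at hXYZ; simpa using hXYZ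
      have hR2a : (Real.sqrt (1-(a/g)^2))^2 = a^2 := by
        have h' := k1.2; rw [hX0, hZn] at h'; simpa using h'
      have hS2a : (Real.sqrt (1-(a/h)^2))^2 = a^2 := by
        have h' := k2.2; rw [hY0, hZn] at h'; simpa using h'
      rw [hR2] at hR2a
      rw [hS2] at hS2a
      -- (a/g)² = 1-a² = (a/h)²  ⇒ g = h, then a² = 1/3
      have hgg : (a/g)^2 * g^2 = a^2 := by field_simp
      have hhh : (a/h)^2 * h^2 = a^2 := by field_simp
      have ha2ne : a^2 ≠ 0 := pow_ne_zero 2 h0a.ne'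
      have hgh2 : g^2 = h^2 := by
        have h1 : (a/g)^2 = (a/h)^2 := by linarith only [hR2a, hS2a]
        have h2 : a^2 * g^2 = a^2 * h^2 := by
          linear_combination h^2 * hgg - g^2 * hhh - g^2*h^2 * h1
        exact mul_left_cancel₀ ha2ne h2
      have hgheq : g = h := eq_of_sq hg.le hh.le hgh2
      have hg2 : g^2 = 1/2 := by linarith only [hgh, hgh2]
      have ha3 : a^2 = 1/3 := by
        have h1 : (a/g)^2 = 1 - a^2 := by linarith only [hR2a]
        have h2 : a^2 = (1 - a^2) * g^2 := by
          linear_combination -hgg + g^2 * h1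
        rw [hg2] at h2
        linarith only [h2]
      exact hside ⟨hgheq, ha3⟩
  · intro y hy
    obtain ⟨l, hl, rfl⟩ := (mem_circleSet_iff b hg y).mp hy
    intro x hx
    obtain ⟨v, hv, hxv, hvn, X, Y, Z, hco, -⟩ := exists_coords b x
    have key := alpha_circle_coords b hcos hα0 hαπ h0a hg hh hgh hx hv hxv hvn hco
    rw [hxv]
    rw [angle_iff hcos hα0 hαπ _ hv (gv_norm b hg hh hgh hl) hvn]
    rw [norm_inner_symm]
    rw [hco]
    exact backward b hg hh h0a X Y Z key.1 key.2 hl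

lemma main_pos {g h : ℝ} (hcos : Real.cos α = a) (hα0 : 0 ≤ α) (hαπ : α ≤ Real.pi)
    (h0a : 0 < a) (hg : 0 < g) (hh : 0 < h) (hgh : g^2 + h^2 = 1)
    (hag : a < g) (hah : a < h) (hside : ¬(g = h ∧ a^2 = 1/3)) :
    IsHighlyAlphaSymmetric α (circleSet (b 0) (b 1) g h) := by
  refine ⟨circle_infinite b hg hh, alpha_circle_infinite b hcos hα0 hαπ h0a hg hh hgh hag, ?_⟩
  intro S hS hS3
  rw [alphaSet_three b hcos hα0 hαπ h0a hg hh hgh S hS hS3]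
  exact alpha_alpha_circle b hcos hα0 hαπ h0a hg hh hgh hag hah hside

set_option maxHeartbeats 1000000 in
lemma main_neg {g h : ℝ} (hcos : Real.cos α = a) (hα0 : 0 ≤ α) (hαπ : α ≤ Real.pi)
    (h0a : 0 < a) (hg : 0 < g) (hh : 0 < h) (hgh : g^2 + h^2 = 1)
    (hha : h < a) (hag : a < g) (har : a^2 < 1 - (a/g)^2) :
    ¬ IsHighlyAlphaSymmetric α (circleSet (b 0) (b 1) g h) := by
  rintro ⟨-, -, h3⟩
  obtain ⟨u1, u2, u3, ne12, ne13, ne23⟩ := units_1neg1I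
  have hd12 : Projectivization.mk ℂ (gv b g h 1) (gv_ne b hg 1)
      ≠ Projectivization.mk ℂ (gv b g h (-1)) (gv_ne b hg (-1)) :=
    fun he => ne12 (gv_inj b hg hh he)
  have hd13 : Projectivization.mk ℂ (gv b g h 1) (gv_ne b hg 1)
      ≠ Projectivization.mk ℂ (gv b g h Complex.I) (gv_ne b hg Complex.I) :=
    fun he => ne13 (gv_inj b hg hh he)
  have hd23 : Projectivization.mk ℂ (gv b g h (-1)) (gv_ne b hg (-1))
      ≠ Projectivization.mk ℂ (gv b g h Complex.I) (gv_ne b hg Complex.I) :=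
    fun he => ne23 (gv_inj b hg hh he)
  set S : Set (Projectivization ℂ H) :=
    {Projectivization.mk ℂ (gv b g h 1) (gv_ne b hg 1),
     Projectivization.mk ℂ (gv b g h (-1)) (gv_ne b hg (-1)),
     Projectivization.mk ℂ (gv b g h Complex.I) (gv_ne b hg Complex.I)} with hSdef
  have hS : S ⊆ circleSet (b 0) (b 1) g h := by
    intro x hx
    rw [hSdef] at hx
    simp only [Set.mem_insert_iff, Set.mem_singleton_iff] at hx
    rcases hx with rfl | rfl | rfl
    · exact (mem_circleSet_iff b hg _).mpr ⟨1, u1, rfl⟩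
    · exact (mem_circleSet_iff b hg _).mpr ⟨-1, u2, rfl⟩
    · exact (mem_circleSet_iff b hg _).mpr ⟨Complex.I, u3, rfl⟩
  have hcard : S.ncard = 3 := Set.ncard_eq_three.mpr ⟨_, _, _, hd12, hd13, hd23, hSdef⟩
  have hT := h3 S hS hcard
  -- the counterexample point
  obtain ⟨hG, hR2, hR, hGR, hGg⟩ := GR_facts h0a hg hag
  set R := Real.sqrt (1 - (a/g)^2) with hRdef
  have haR : a < R := by
    have h1 : a = Real.sqrt (a^2) := (Real.sqrt_sq h0a.le).symm
    have h2 : R = Real.sqrt (R^2) := (Real.sqrt_sq hR.le).symm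
    rw [h1, h2]
    exact Real.sqrt_lt_sqrt (sq_nonneg a) (by rw [hR2]; exact har)
  have hZ0 : 0 < a / R := div_pos h0a hR
  have hZ1 : a / R < 1 := (div_lt_one hR).mpr haR
  have hY0pos : 0 < 1 - (a/R)^2 := by
    have := pow_lt_one₀ hZ0.le hZ1 (two_ne_zero)
    linarith only [this]
  set Y0 := Real.sqrt (1 - (a/R)^2) with hY0def
  have hY0 : 0 < Y0 := Real.sqrt_pos.mpr hY0pos
  have hY02 : Y0^2 = 1 - (a/R)^2 := Real.sq_sqrt hY0pos.le
  set w : H := (0:ℂ) • b 0 + ((Y0:ℝ):ℂ) • b 1 + (((a/R : ℝ)):ℂ) • b 2 with hwdef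
  have hwn : ‖w‖ = 1 := by
    have h1 : ‖w‖^2 = 1 := by
      rw [hwdef, norm3]
      simp only [norm_zero, Complex.norm_real, Real.norm_eq_abs, abs_of_pos hY0,
        abs_of_pos hZ0]
      linarith only [hY02]
    exact eq_of_sq (norm_nonneg w) zero_le_one (by rw [h1]; norm_num)
  have hw0 : w ≠ 0 := by
    intro h0; rw [h0, norm_zero] at hwn; norm_num at hwn
  have hpmem : Projectivization.mk ℂ w hw0 ∈ alphaSet α (alphaSet α S) := by
    intro q hq
    obtain ⟨u, hu, hqu, hun, X, Y, Z, hco, hXYZ⟩ := exists_coords b q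
    have e : ∀ (l : ℂ), ‖l‖ = 1 →
        Projectivization.mk ℂ (gv b g h l) (gv_ne b hg l) ∈ S →
        ‖(inner ℂ u (gv b g h l) : ℂ)‖ = a := by
      intro l hl hmem
      have h1 := hq _ hmem
      rw [hqu] at h1
      exact (angle_iff hcos hα0 hαπ hu _ hun (gv_norm b hg hh hgh hl)).mp h1
    have e1 := e 1 u1 (by rw [hSdef]; left; rfl)
    have e2 := e (-1) u2 (by rw [hSdef]; right; left; rfl)
    have e3 := e Complex.I u3 (by rw [hSdef]; right; right; rfl)
    rw [hco] at e1 e2 e3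
    have key := forward3 b hg hh h0a X Y Z u1 u2 u3 ne12 ne13 ne23 e1 e2 e3
    have hYq : Y = 0 := by
      rcases key.1 with hX | hY
      · exfalso
        rw [hX, norm_zero] at key
        have h1 : ‖Y‖^2 ≤ 1 := by linarith only [hXYZ, sq_nonneg (‖X‖), sq_nonneg (‖Z‖)]
        have h2 : h^2 < a^2 := pow_lt_pow_left₀ hha hh.le two_ne_zero
        have h3 : h^2*‖Y‖^2 ≤ h^2*1 := mul_le_mul_of_nonneg_left h1 (sq_nonneg h)
        linarith only [key.2, h3, h2]
      · exact hY
    have hXq : ‖X‖^2 = (a/g)^2 := by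
      have h' := key.2
      rw [hYq, norm_zero] at h'
      have hgg : (a/g)^2 * g^2 = a^2 := by field_simp
      have h1 : g^2 * ‖X‖^2 = g^2 * (a/g)^2 := by linear_combination h' - hgg
      exact mul_left_cancel₀ (pow_ne_zero 2 hg.ne') h1
    have hZq : ‖Z‖ = R := by
      apply eq_of_sq (norm_nonneg Z) hR.le
      rw [hYq, norm_zero] at hXYZ
      rw [hR2]
      linear_combination hXYZ - hXq
    rw [hqu]
    rw [angle_iff hcos hα0 hαπ hw0 hu hwn hun]
    rw [hwdef, hco, inner3]
    simp only [map_zero, zero_mul, zero_add, hYq, mul_zero, add_zero]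
    rw [Complex.conj_ofReal, norm_mul, Complex.norm_real, Real.norm_eq_abs,
      abs_of_pos hZ0, hZq]
    field_simp
  rw [hT] at hpmem
  obtain ⟨l, hl, hpl⟩ := (mem_circleSet_iff b hg _).mp hpmem
  obtain ⟨t, ht⟩ := (Projectivization.mk_eq_mk_iff' ℂ _ _ hw0 (gv_ne b hg l)).mp hpl
  have h1 : (inner ℂ (b 0) (t • gv b g h l) : ℂ) = t * g := by
    rw [inner_smul_right, gv_eq, inner_b0]
  have h2 : (inner ℂ (b 0) w : ℂ) = 0 := by rw [hwdef, inner_b0]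
  rw [ht, h2] at h1
  have hgC : ((g:ℝ):ℂ) ≠ 0 := by exact_mod_cast hg.ne'
  have ht0 : t = 0 := by
    rcases mul_eq_zero.mp h1.symm with h' | h'
    · exact h'
    · exact absurd h' hgC
  rw [ht0, zero_smul] at ht
  exact hw0 ht.symm

end CP

/-- which circles are highly-α-symmetric in dimension three. -/
theorem circle_highly_alpha_symmetric_dim_three
    (hdim : Module.rank ℂ H = 3)
    (α : ℝ) (hα₁ : Real.pi / 4 < α) (hα₂ : α < Real.pi / 2)
    (a : ℝ) (ha : a = Real.cos α)
    (e₁ e₂ : H) (he₁ : ‖e₁‖ = 1) (he₂ : ‖e₂‖ = 1) (he₁₂ : (inner ℂ e₁ e₂ : ℂ) = 0) :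
    (∀ c d : ℝ, a ≠ 1 / Real.sqrt 3 → d ≤ c → a < d → c ^ 2 + d ^ 2 = 1 →
      IsHighlyAlphaSymmetric α (circleSet e₁ e₂ c d)) ∧
    (∀ c d : ℝ, a = 1 / Real.sqrt 3 → d < c → a < d → c ^ 2 + d ^ 2 = 1 →
      IsHighlyAlphaSymmetric α (circleSet e₁ e₂ c d)) ∧
    (∀ c d : ℝ, 0 < d → d < a → d < Real.sqrt ((1 - 2 * a ^ 2) / (1 - a ^ 2)) →
      c ^ 2 + d ^ 2 = 1 → 0 < c →
      ¬ IsHighlyAlphaSymmetric α (circleSet e₁ e₂ c d)) := by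
  classical
  have hπ := Real.pi_pos
  have hα0 : 0 ≤ α := by linarith
  have hαπ : α ≤ Real.pi := by linarith
  have hcos : Real.cos α = a := ha.symm
  have h0a : 0 < a := by
    rw [ha]
    exact Real.cos_pos_of_mem_Ioo ⟨by linarith, hα₂⟩
  have haa : a^2 < 1/2 := by
    have h1 : Real.cos α < Real.cos (Real.pi/4) :=
      Real.cos_lt_cos_of_nonneg_of_le_pi (by linarith) hαπ hα₁
    rw [Real.cos_pi_div_four, ← ha] at h1
    have h2 : Real.sqrt 2 ^ 2 = 2 := Real.sq_sqrt (by norm_num)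
    nlinarith [Real.sqrt_nonneg 2, h1, h0a, h2]
  -- finite-dimensionality and an orthonormal basis extending e₁, e₂
  have hdim' : Module.rank ℂ H = (3 : ℕ) := by exact_mod_cast hdim
  have hfin : FiniteDimensional ℂ H := FiniteDimensional.of_rank_eq_nat hdim'
  have hfr : Module.finrank ℂ H = 3 := Module.finrank_eq_of_rank_eq hdim'
  have h11 : (inner ℂ e₁ e₁ : ℂ) = 1 := by
    rw [inner_self_eq_norm_sq_to_K, he₁]; norm_num
  have h22 : (inner ℂ e₂ e₂ : ℂ) = 1 := by
    rw [inner_self_eq_norm_sq_to_K, he₂]; norm_num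
  have h21 : (inner ℂ e₂ e₁ : ℂ) = 0 := by
    rw [← inner_conj_symm, he₁₂, map_zero]
  have horth : Orthonormal ℂ (Set.restrict ({0, 1} : Set (Fin 3)) ![e₁, e₂, 0]) := by
    rw [orthonormal_iff_ite]
    rintro ⟨i, hi⟩ ⟨j, hj⟩
    simp only [Set.mem_insert_iff, Set.mem_singleton_iff] at hi hj
    rcases hi with rfl | rfl <;> rcases hj with rfl | rfl <;>
      simp [Set.restrict, h11, h22, he₁₂, h21, Subtype.ext_iff, he₁, he₂]
  obtain ⟨b, hb⟩ := horth.exists_orthonormalBasis_extension_of_card_eq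
    (by simpa using hfr)
  have hb0 : b 0 = e₁ := by
    have := hb 0 (by simp)
    simpa using this
  have hb1 : b 1 = e₂ := by
    have := hb 1 (by simp)
    simpa using this
  refine ⟨?_, ?_, ?_⟩
  · -- case (ii)
    intro c d hne hdc had hcd
    have h0d : 0 < d := lt_trans h0a had
    have h0c : 0 < c := lt_of_lt_of_le h0d hdc
    have hac : a < c := lt_of_lt_of_le had hdc
    have hside : ¬(c = d ∧ a^2 = 1/3) := by
      rintro ⟨-, h2⟩
      apply hne
      have h3 : a = Real.sqrt (1/3) := by rw [← h2, Real.sqrt_sq h0a.le]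
      rw [h3, show (1/3 : ℝ) = (3:ℝ)⁻¹ by norm_num, Real.sqrt_inv, one_div]
    rw [← hb0, ← hb1]
    exact CP.main_pos b hcos hα0 hαπ h0a h0c h0d hcd hac had hside
  · -- case (iii)
    intro c d heq hdc had hcd
    have h0d : 0 < d := lt_trans h0a had
    have h0c : 0 < c := lt_trans h0d hdc
    have hac : a < c := lt_trans had hdc
    have hside : ¬(c = d ∧ a^2 = 1/3) := by
      rintro ⟨h1, -⟩
      exact absurd h1 (ne_of_gt hdc)
    rw [← hb0, ← hb1]
    exact CP.main_pos b hcos hα0 hαπ h0a h0c h0d hcd hac had hside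
  · -- case (iv)
    intro c d h0d hda hdlt hcd h0c
    have hac : a < c := by nlinarith [h0c, h0a, hcd, haa, hda, h0d]
    have har : a^2 < 1 - (a/c)^2 := by
      have h1a : 0 < 1 - a^2 := by nlinarith
      have hd2 : d^2 < (1-2*a^2)/(1-a^2) := (Real.lt_sqrt h0d.le).mp hdlt
      have hkey : d^2 * (1-a^2) < 1-2*a^2 := (lt_div_iff₀ h1a).mp hd2
      have hc2 : (0:ℝ) < c^2 := by positivity
      have h2 : a^2 / c^2 < 1 - a^2 := by
        rw [div_lt_iff₀ hc2]
        nlinarith [hkey, hcd]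
      rw [div_pow]
      linarith
    rw [← hb0, ← hb1]
    exact CP.main_neg b hcos hα0 hαπ h0a h0c h0d hcd hda hac har
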